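/- Let $\hat{W}_n = \sum_{j\geq 1} X_{n,j}/n$ with $X_{n,j}$ independent Binomial$(n,p_j)$ and $W = \sum_j p_j < \infty$. For all $\lambda \geq 0$, $\log \mathbb{E}\, e^{-\lambda(\hat{W}_n - W)} \leq \frac{\lambda^2 W}{2n}$, i.e. $\hat W_n$ is sub-Gaussian on the left tail with variance factor $W/n$. -/

import Mathlib

open MeasureTheory ProbabilityTheory Real Filter

lemma exp_neg_quad_aux {x : ℝ} (hx : 0 ≤ x) : Real.exp (-x) - 1 + x ≤ x ^ 2 / 2 := by
  have hderiv : ∀ z : ℝ, HasDerivAt (fun y : ℝ => Real.exp (-y) - 1 + y - y ^ 2 / 2)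
      (-Real.exp (-z) + 1 - z) z := by
    intro z
    have h1 : HasDerivAt (fun y : ℝ => Real.exp (-y)) (-Real.exp (-z)) z := by
      simpa [Function.comp_def] using (Real.hasDerivAt_exp (-z)).comp z (hasDerivAt_neg z)
    have h2 : HasDerivAt (fun y : ℝ => y ^ 2 / 2) z z := by
      simpa using (hasDerivAt_pow 2 z).div_const 2
    have := ((h1.sub_const 1).add (hasDerivAt_id z)).sub h2
    exact this
  have hanti : AntitoneOn (fun y : ℝ => Real.exp (-y) - 1 + y - y ^ 2 / 2) (Set.Ici 0) := by
    apply antitoneOn_of_deriv_nonpos (convex_Ici 0)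
    · exact Continuous.continuousOn (by continuity)
    · intro z _
      exact (hderiv z).differentiableAt.differentiableWithinAt
    · intro z hz
      rw [(hderiv z).deriv]
      have h := Real.add_one_le_exp (-z)
      rw [interior_Ici] at hz
      have : (0:ℝ) < z := hz
      linarith
  have h0 : (fun y : ℝ => Real.exp (-y) - 1 + y - y ^ 2 / 2) x ≤
      (fun y : ℝ => Real.exp (-y) - 1 + y - y ^ 2 / 2) 0 :=
    hanti (Set.self_mem_Ici) hx hx
  simp at h0
  linarith

theorem stmt
    {Ω : Type*} [MeasurableSpace Ω] (μ : Measure Ω) [IsProbabilityMeasure μ]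
    (p : ℕ → ℝ) (hp : ∀ j, p j ∈ Set.Ioo (0 : ℝ) 1) (hsum : Summable p)
    (n : ℕ) (X : ℕ → Ω → ℕ)
    (hmeas : ∀ j, Measurable (X j))
    (hindep : iIndepFun X μ)
    (hbin : ∀ j k, μ {ω | X j ω = k} =
      ENNReal.ofReal ((n.choose k : ℝ) * p j ^ k * (1 - p j) ^ (n - k)))
    (W : ℝ) (hW : ∑' j, p j = W) (hn : 1 ≤ n) :
    ∀ lam : ℝ, 0 ≤ lam →
      Real.log (∫ ω, Real.exp (-lam * ((∑' j, (X j ω : ℝ)) / n - W)) ∂μ)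
        ≤ lam ^ 2 * W / (2 * n) := by
  intro lam hlam
  have hn0 : (0:ℝ) < n := by exact_mod_cast hn
  set t : ℝ := -lam / n with ht_def
  have ht : t ≤ 0 := div_nonpos_of_nonpos_of_nonneg (neg_nonpos.mpr hlam) hn0.le
  have hW0 : 0 ≤ W := hW ▸ tsum_nonneg (fun j => (hp j).1.le)
  -- X j ≤ n almost everywhere
  have hXle : ∀ j, ∀ᵐ ω ∂μ, X j ω ≤ n := by
    intro j
    rw [ae_iff]
    have hsub : {ω | ¬ X j ω ≤ n} ⊆ ⋃ k : ℕ, {ω | X j ω = n + 1 + k} := by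
      intro ω hω
      simp only [Set.mem_setOf_eq, not_le] at hω
      exact Set.mem_iUnion.2 ⟨X j ω - (n + 1), by simp only [Set.mem_setOf_eq]; omega⟩
    refine measure_mono_null hsub (measure_iUnion_null fun k => ?_)
    rw [hbin]
    simp [Nat.choose_eq_zero_of_lt (by omega : n < n + 1 + k)]
  -- the moment generating function of each X j
  have hmgf : ∀ j, ∫ ω, Real.exp (t * (X j ω : ℝ)) ∂μ
      = (p j * Real.exp t + (1 - p j)) ^ n := by
    intro j
    have hmapP : IsProbabilityMeasure (μ.map (X j)) :=
      Measure.isProbabilityMeasure_map (hmeas j).aemeasurable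
    have hgm : Measurable (fun k : ℕ => Real.exp (t * k)) := measurable_from_top
    have hint : Integrable (fun k : ℕ => Real.exp (t * k)) (μ.map (X j)) := by
      refine Integrable.mono' (integrable_const 1) hgm.aestronglyMeasurable ?_
      refine Eventually.of_forall fun k => ?_
      rw [Real.norm_eq_abs, abs_of_pos (Real.exp_pos _)]
      exact Real.exp_le_one_iff.mpr (mul_nonpos_of_nonpos_of_nonneg ht (Nat.cast_nonneg _))
    have hmapk : ∀ k : ℕ, (μ.map (X j)) {k} = μ {ω | X j ω = k} := by
      intro k
      rw [Measure.map_apply (hmeas j) (measurableSet_singleton k)]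
      rfl
    have hmap1 : ∫ ω, Real.exp (t * (X j ω : ℝ)) ∂μ
        = ∫ k, Real.exp (t * (k : ℝ)) ∂(μ.map (X j)) :=
      (integral_map (hmeas j).aemeasurable hgm.aestronglyMeasurable).symm
    rw [hmap1, integral_countable' hint]
    rw [tsum_eq_sum (s := Finset.range (n + 1)) (by
      intro k hk
      rw [measureReal_def, hmapk, hbin, Nat.choose_eq_zero_of_lt (by simpa using hk)]
      simp)]
    rw [add_pow]
    refine Finset.sum_congr rfl fun k hk => ?_
    rw [measureReal_def, hmapk, hbin, ENNReal.toReal_ofReal (mul_nonneg (mul_nonneg (Nat.cast_nonneg _)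
      (pow_nonneg (hp j).1.le k)) (pow_nonneg (by linarith [(hp j).2.le] : (0:ℝ) ≤ 1 - p j) _))]
    rw [smul_eq_mul, mul_comm t (k : ℝ), Real.exp_nat_mul, mul_pow]
    ring
  -- independence of the real valued variables
  have hYmeas : ∀ j, Measurable (fun ω => (X j ω : ℝ)) :=
    fun j => measurable_from_top.comp (hmeas j)
  have hY : iIndepFun (fun j ω => (X j ω : ℝ)) μ :=
    hindep.comp (fun _ (k : ℕ) => (k : ℝ)) (fun _ => measurable_from_top)
  -- bound on expectation of partial sums
  have hprodbound : ∀ m : ℕ,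
      ∫ ω, Real.exp (t * ∑ j ∈ Finset.range m, (X j ω : ℝ)) ∂μ
        ≤ Real.exp ((n : ℝ) * (Real.exp t - 1) * ∑ j ∈ Finset.range m, p j) := by
    intro m
    have hmg := hY.mgf_sum (t := t) hYmeas (Finset.range m)
    simp only [mgf, Finset.sum_apply] at hmg
    rw [hmg]
    have hfac : ∀ j ∈ Finset.range m,
        mgf (fun ω => (X j ω : ℝ)) μ t ≤ Real.exp ((n : ℝ) * (p j * (Real.exp t - 1))) := by
      intro j _
      rw [mgf, hmgf j]
      have h1 : p j * Real.exp t + (1 - p j) = 1 + p j * (Real.exp t - 1) := by ring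
      have h2 : (0:ℝ) ≤ p j * Real.exp t + (1 - p j) := by
        have := (hp j).1.le
        have := (hp j).2.le
        nlinarith [Real.exp_pos t]
      calc (p j * Real.exp t + (1 - p j)) ^ n
          ≤ (Real.exp (p j * (Real.exp t - 1))) ^ n := by
            refine pow_le_pow_left₀ h2 ?_ n
            rw [h1]
            linarith [Real.add_one_le_exp (p j * (Real.exp t - 1))]
        _ = Real.exp ((n : ℝ) * (p j * (Real.exp t - 1))) := (Real.exp_nat_mul _ n).symm
    calc ∏ j ∈ Finset.range m, mgf (fun ω => (X j ω : ℝ)) μ t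
        ≤ ∏ j ∈ Finset.range m, Real.exp ((n : ℝ) * (p j * (Real.exp t - 1))) := by
          refine Finset.prod_le_prod (fun j _ => ?_) hfac
          rw [mgf, hmgf j]
          refine pow_nonneg ?_ n
          nlinarith [Real.exp_pos t, (hp j).1.le, (hp j).2.le]
      _ = Real.exp (∑ j ∈ Finset.range m, (n : ℝ) * (p j * (Real.exp t - 1))) :=
          (Real.exp_sum _ _).symm
      _ = Real.exp ((n : ℝ) * (Real.exp t - 1) * ∑ j ∈ Finset.range m, p j) := by
          rw [Finset.mul_sum]
          congr 1
          exact Finset.sum_congr rfl fun j _ => by ring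
  -- almost everywhere summability
  set g : Ω → ENNReal := fun ω => ∑' j, (X j ω : ENNReal) with hg_def
  have hXem : ∀ j, Measurable (fun ω => (X j ω : ENNReal)) :=
    fun j => measurable_from_top.comp (hmeas j)
  have hgmeas : Measurable g := Measurable.ennreal_tsum hXem
  have hlintle : ∀ j, ∫⁻ ω, ((X j ω : ENNReal)) ∂μ ≤ ENNReal.ofReal ((n:ℝ)^2 * p j) := by
    intro j
    have hms : MeasurableSet {ω | X j ω = 0} := (hmeas j) (measurableSet_singleton 0)
    have hb : ∀ᵐ ω ∂μ, (X j ω : ENNReal) ≤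
        ({ω | X j ω = 0}ᶜ).indicator (fun _ => (n : ENNReal)) ω := by
      filter_upwards [hXle j] with ω hω
      by_cases h0 : X j ω = 0
      · simp [h0]
      · rw [Set.indicator_of_mem (by simpa using h0)]
        exact_mod_cast Nat.cast_le.mpr hω
    calc ∫⁻ ω, ((X j ω : ENNReal)) ∂μ
        ≤ ∫⁻ ω, ({ω | X j ω = 0}ᶜ).indicator (fun _ => (n : ENNReal)) ω ∂μ :=
          lintegral_mono_ae hb
      _ = (n : ENNReal) * μ ({ω | X j ω = 0}ᶜ) := by
          rw [lintegral_indicator hms.compl, setLIntegral_const]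
      _ ≤ ENNReal.ofReal ((n:ℝ)^2 * p j) := by
          rw [prob_compl_eq_one_sub hms, hbin j 0]
          simp only [Nat.choose_zero_right, Nat.cast_one, pow_zero, Nat.sub_zero, one_mul, mul_one]
          have hq : (0:ℝ) ≤ (1 - p j) ^ n := pow_nonneg (by linarith [(hp j).2.le]) n
          rw [show (1 : ENNReal) = ENNReal.ofReal 1 from (ENNReal.ofReal_one).symm,
            ← ENNReal.ofReal_sub _ hq]
          have hbern : 1 - (1 - p j) ^ n ≤ (n : ℝ) * p j := by
            have h := one_add_mul_le_pow (a := -p j) (by linarith [(hp j).2] : (-2:ℝ) ≤ -p j) n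
            have h2 : (1:ℝ) + (n:ℝ) * -(p j) ≤ (1 - p j) ^ n := by
              rw [show (1:ℝ) - p j = 1 + -p j by ring]
              exact h
            linarith
          calc (n : ENNReal) * ENNReal.ofReal (1 - (1 - p j) ^ n)
              ≤ (n : ENNReal) * ENNReal.ofReal ((n : ℝ) * p j) := by
                exact mul_le_mul_right (ENNReal.ofReal_le_ofReal hbern) _
            _ = ENNReal.ofReal ((n:ℝ)^2 * p j) := by
                rw [← ENNReal.ofReal_natCast n, ← ENNReal.ofReal_mul (Nat.cast_nonneg n)]
                congr 1
                ring
  have hglt : ∀ᵐ ω ∂μ, g ω ≠ ⊤ := by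
    have hlt : ∫⁻ ω, g ω ∂μ ≠ ⊤ := by
      show (∫⁻ ω, ∑' j, (X j ω : ENNReal) ∂μ) ≠ ⊤
      rw [lintegral_tsum (fun j => (hXem j).aemeasurable)]
      refine ne_top_of_le_ne_top ?_ (ENNReal.tsum_le_tsum hlintle)
      rw [← ENNReal.ofReal_tsum_of_nonneg (fun j => mul_nonneg (by positivity) (hp j).1.le) (hsum.mul_left _)]
      exact ENNReal.ofReal_ne_top
    filter_upwards [ae_lt_top hgmeas hlt] with ω h using h.ne
  have hSummable : ∀ᵐ ω ∂μ, Summable (fun j => (X j ω : ℝ)) := by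
    filter_upwards [hglt] with ω h
    have := ENNReal.summable_toReal h
    simpa [ENNReal.toReal_natCast] using this
  -- the total sum function
  set S : Ω → ℝ := fun ω => (g ω).toReal with hS_def
  have hSeq : ∀ ω, (∑' j, (X j ω : ℝ)) = S ω := by
    intro ω
    show ∑' j, (X j ω : ℝ) = (∑' j, (X j ω : ENNReal)).toReal
    rw [ENNReal.tsum_toReal_eq (fun j => ENNReal.natCast_ne_top _)]
    simp [ENNReal.toReal_natCast]
  have hSmeas : Measurable S := hgmeas.ennreal_toReal
  have hSnn : ∀ ω, 0 ≤ S ω := fun ω => ENNReal.toReal_nonneg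
  -- integrability helper
  have hintexp : ∀ (f : Ω → ℝ), Measurable f → (∀ ω, 0 ≤ f ω) →
      Integrable (fun ω => Real.exp (t * f ω)) μ := by
    intro f hf h0
    refine Integrable.mono' (integrable_const 1) ((hf.const_mul t).exp.aestronglyMeasurable) ?_
    refine Eventually.of_forall fun ω => ?_
    rw [Real.norm_eq_abs, abs_of_pos (Real.exp_pos _)]
    exact Real.exp_le_one_iff.mpr (mul_nonpos_of_nonpos_of_nonneg ht (h0 ω))
  have hintS : Integrable (fun ω => Real.exp (t * S ω)) μ := hintexp S hSmeas hSnn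
  -- comparison with partial sums
  have hcompare : ∀ m,
      ∫ ω, Real.exp (t * S ω) ∂μ ≤ ∫ ω, Real.exp (t * ∑ j ∈ Finset.range m, (X j ω : ℝ)) ∂μ := by
    intro m
    refine integral_mono_ae hintS (hintexp _ (by
        exact Finset.measurable_sum _ (fun j _ => hYmeas j)) (fun ω =>
        Finset.sum_nonneg fun j _ => Nat.cast_nonneg _)) ?_
    filter_upwards [hSummable] with ω hω
    have h1 : ∑ j ∈ Finset.range m, (X j ω : ℝ) ≤ S ω := by
      rw [← hSeq ω]
      exact Summable.sum_le_tsum _ (fun j _ => Nat.cast_nonneg _) hω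
    exact Real.exp_le_exp.mpr (mul_le_mul_of_nonpos_left h1 ht)
  -- taking the limit
  have hlimit : ∫ ω, Real.exp (t * S ω) ∂μ ≤ Real.exp ((n : ℝ) * (Real.exp t - 1) * W) := by
    have hs : Tendsto (fun m => ∑ j ∈ Finset.range m, p j) atTop (nhds W) := by
      rw [← hW]
      exact hsum.hasSum.tendsto_sum_nat
    have htend : Tendsto
        (fun m => Real.exp ((n : ℝ) * (Real.exp t - 1) * ∑ j ∈ Finset.range m, p j)) atTop
        (nhds (Real.exp ((n : ℝ) * (Real.exp t - 1) * W))) :=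
      (Real.continuous_exp.tendsto _).comp (hs.const_mul _)
    exact ge_of_tendsto htend (Eventually.of_forall fun m => (hcompare m).trans (hprodbound m))
  -- positivity of the integral
  have hpos : 0 < ∫ ω, Real.exp (t * S ω) ∂μ := by
    rw [integral_pos_iff_support_of_nonneg (fun ω => (Real.exp_pos _).le) hintS]
    have hsupp : Function.support (fun ω => Real.exp (t * S ω)) = Set.univ :=
      Set.eq_univ_of_forall fun ω => (Real.exp_pos _).ne'
    rw [hsupp]
    simp
  -- rewriting the integrand
  have hrw : (fun ω => Real.exp (-lam * ((∑' j, (X j ω : ℝ)) / n - W)))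
      = fun ω => Real.exp (lam * W) * Real.exp (t * S ω) := by
    funext ω
    rw [hSeq ω, ← Real.exp_add]
    congr 1
    rw [ht_def]
    field_simp
    ring
  rw [hrw, integral_const_mul]
  have hlog : Real.log (Real.exp (lam * W) * ∫ ω, Real.exp (t * S ω) ∂μ)
      ≤ lam * W + (n : ℝ) * (Real.exp t - 1) * W := by
    rw [Real.log_mul (Real.exp_ne_zero _) hpos.ne', Real.log_exp]
    have := Real.log_le_log hpos hlimit
    rw [Real.log_exp] at this
    linarith
  refine hlog.trans ?_
  -- final elementary inequality
  have hx : (0:ℝ) ≤ lam / n := div_nonneg hlam hn0.le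
  have key := exp_neg_quad_aux hx
  have ht' : t = -(lam / n) := by rw [ht_def, neg_div]
  have h1 : lam * W + (n : ℝ) * (Real.exp t - 1) * W
      = ((n : ℝ) * W) * (Real.exp (-(lam / n)) - 1 + lam / n) := by
    rw [ht']
    field_simp
    ring
  have h2 : ((n : ℝ) * W) * ((lam / n) ^ 2 / 2) = lam ^ 2 * W / (2 * n) := by
    field_simp
  rw [h1, ← h2]
  exact mul_le_mul_of_nonneg_left key (by positivity)
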